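/- Let β ∈ (0,1] and let A0, A2, Q0, Q1, Q2 be positive integers. Let B′ be the union over all integer triples (q0,q1,q2) ≠ (0,0,0) with |q0| ≤ Q0, |q1| ≤ Q1, |q2| ≤ Q2 of the sets {(g0,g1,g2) ∈ (1,4]³ : |A0·g0·q0 + g1·q1 + A2·g2·q2| < β}. Then μ(B′) ≤ 3024·β·Q0·Q2. -/

import Mathlib

open MeasureTheory

lemma vol_Iq (β c : ℝ) (hβ : 0 < β) (q : ℤ) (hq : q ≠ 0) :
    volume {y : ℝ | y ∈ Set.Ioc (1:ℝ) 4 ∧ |c + y * q| < β}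
      ≤ ENNReal.ofReal (2 * β / |(q : ℝ)|) := by
  have hq' : (q:ℝ) ≠ 0 := Int.cast_ne_zero.mpr hq
  rcases lt_or_gt_of_ne hq' with hneg | hpos
  · have hsub : {y : ℝ | y ∈ Set.Ioc (1:ℝ) 4 ∧ |c + y * q| < β}
        ⊆ Set.Ioo ((β - c) / q) ((-β - c) / q) := by
      intro y hy
      have h := abs_lt.mp hy.2
      constructor
      · rw [div_lt_iff_of_neg hneg]; linarith
      · rw [lt_div_iff_of_neg hneg]; linarith
    calc volume _ ≤ volume (Set.Ioo ((β - c) / q) ((-β - c) / q)) := measure_mono hsub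
      _ = ENNReal.ofReal ((-β - c) / q - (β - c) / q) := Real.volume_Ioo
      _ ≤ ENNReal.ofReal (2 * β / |(q:ℝ)|) := by
          apply ENNReal.ofReal_le_ofReal
          apply le_of_eq
          rw [abs_of_neg hneg, div_sub_div_same, show -β - c - (β - c) = -(2*β) from by ring,
            div_neg, neg_div]
  · have hsub : {y : ℝ | y ∈ Set.Ioc (1:ℝ) 4 ∧ |c + y * q| < β}
        ⊆ Set.Ioo ((-β - c) / q) ((β - c) / q) := by
      intro y hy
      have h := abs_lt.mp hy.2
      constructor
      · rw [div_lt_iff₀ hpos]; linarith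
      · rw [lt_div_iff₀ hpos]; linarith
    calc volume _ ≤ volume (Set.Ioo ((-β - c) / q) ((β - c) / q)) := measure_mono hsub
      _ = ENNReal.ofReal ((β - c) / q - (-β - c) / q) := Real.volume_Ioo
      _ ≤ ENNReal.ofReal (2 * β / |(q:ℝ)|) := by
          apply ENNReal.ofReal_le_ofReal
          apply le_of_eq
          rw [abs_of_pos hpos, div_sub_div_same, show β - c - (-β - c) = 2*β from by ring]


lemma ofReal_nat_mul (m : ℕ) (t : ℝ) :
    (m : ENNReal) * ENNReal.ofReal t = ENNReal.ofReal (m * t) := by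
  rw [ENNReal.ofReal_mul (by positivity), ENNReal.ofReal_natCast]

lemma lemA (β c : ℝ) (hβ0 : 0 < β) (hβ1 : β ≤ 1) :
    volume {y : ℝ | y ∈ Set.Ioc (1:ℝ) 4 ∧ ∃ q : ℤ, q ≠ 0 ∧ |c + y * q| < β}
      ≤ ENNReal.ofReal (30 * β) := by
  classical
  set n : ℝ := |c| with hn
  set M : ℤ := ⌈n⌉ + 1 with hM
  have hn0 : 0 ≤ n := abs_nonneg c
  have hMn : (M:ℝ) ≤ n + 2 := by
    have h1 := Int.ceil_lt_add_one n
    push_cast [hM]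
    linarith
  have hMn' : n + 1 ≤ (M:ℝ) := by
    have h1 := Int.le_ceil n
    push_cast [hM]
    linarith
  set F : Finset ℤ := (Finset.Icc (-M) M).filter (fun q => q ≠ 0 ∧ n - 1 < 4 * |(q:ℝ)|)
    with hF
  set I : ℤ → Set ℝ := fun q => {y : ℝ | y ∈ Set.Ioc (1:ℝ) 4 ∧ |c + y * q| < β} with hI
  have hsub : {y : ℝ | y ∈ Set.Ioc (1:ℝ) 4 ∧ ∃ q : ℤ, q ≠ 0 ∧ |c + y * q| < β}
      ⊆ ⋃ q ∈ F, I q := by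
    rintro y ⟨hy, q, hq0, hq⟩
    have hy1 : (1:ℝ) < y := hy.1
    have hy4 : y ≤ 4 := hy.2
    have hq1 : (1:ℝ) ≤ |(q:ℝ)| := by
      rw [← Int.cast_abs]
      exact_mod_cast Int.one_le_abs hq0
    have hyabs : |y * (q:ℝ)| = y * |(q:ℝ)| := by
      rw [abs_mul, abs_of_pos (by linarith)]
    have hyq : |y * (q:ℝ)| < n + β := by
      calc |y * (q:ℝ)| = |(c + y * q) + (-c)| := by ring_nf
        _ ≤ |c + y * q| + |(-c)| := abs_add_le _ _
        _ < n + β := by rw [abs_neg]; rw [hn]; linarith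
    have hqM : |(q:ℝ)| < (M:ℝ) := by
      have : |(q:ℝ)| ≤ y * |(q:ℝ)| := le_mul_of_one_le_left (by linarith) (le_of_lt hy1)
      rw [← hyabs] at this
      linarith
    have hlow : n - 1 < 4 * |(q:ℝ)| := by
      have h2 : n ≤ |c + y * q| + |y * (q:ℝ)| := by
        calc n = |(c + y * q) + (-(y * q))| := by rw [hn]; ring_nf
          _ ≤ |c + y * q| + |(-(y * (q:ℝ)))| := abs_add_le _ _
          _ = |c + y * q| + |y * (q:ℝ)| := by rw [abs_neg]
      have h3 : y * |(q:ℝ)| ≤ 4 * |(q:ℝ)| := by nlinarith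
      rw [hyabs] at h2
      linarith
    have hqF : q ∈ F := by
      rw [hF, Finset.mem_filter, Finset.mem_Icc]
      refine ⟨?_, hq0, hlow⟩
      have : |q| ≤ M := by
        have : |(q:ℝ)| ≤ (M:ℝ) := le_of_lt hqM
        rw [← Int.cast_abs] at this
        exact_mod_cast this
      exact ⟨by linarith [neg_abs_le q], by linarith [le_abs_self q]⟩
    exact Set.mem_biUnion hqF ⟨hy, hq⟩
  have hcard : F.card ≤ (2 * M + 1).toNat := by
    calc F.card ≤ (Finset.Icc (-M) M).card := Finset.card_filter_le _ _
      _ = (2 * M + 1).toNat := by rw [Int.card_Icc]; congr 1; ring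
  have hM0 : 0 < M := by
    have : (0:ℝ) < (M:ℝ) := by linarith
    exact_mod_cast this
  have hcardR : (F.card : ℝ) ≤ 2 * n + 5 := by
    have h2 : (F.card : ℝ) ≤ ((2 * M + 1).toNat : ℝ) := by exact_mod_cast hcard
    have h4 : (((2 * M + 1).toNat : ℤ)) = 2 * M + 1 := Int.toNat_of_nonneg (by omega)
    have h3 : ((2 * M + 1).toNat : ℝ) = 2 * (M:ℝ) + 1 := by exact_mod_cast h4
    rw [h3] at h2
    linarith
  calc volume _ ≤ volume (⋃ q ∈ F, I q) := measure_mono hsub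
    _ ≤ ∑ q ∈ F, volume (I q) := measure_biUnion_finset_le F I
    _ ≤ ENNReal.ofReal (30 * β) := by
        rcases le_or_gt n 5 with h5 | h5
        · have hterm : ∀ q ∈ F, volume (I q) ≤ ENNReal.ofReal (2 * β) := by
            intro q hqF
            rw [hF, Finset.mem_filter] at hqF
            refine (vol_Iq β c hβ0 q hqF.2.1).trans (ENNReal.ofReal_le_ofReal ?_)
            have hq1 : (1:ℝ) ≤ |(q:ℝ)| := by
              rw [← Int.cast_abs]; exact_mod_cast Int.one_le_abs hqF.2.1
            rw [div_le_iff₀ (by linarith)]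
            nlinarith
          calc ∑ q ∈ F, volume (I q) ≤ F.card • ENNReal.ofReal (2 * β) :=
                Finset.sum_le_card_nsmul F _ _ hterm
            _ = (F.card : ENNReal) * ENNReal.ofReal (2 * β) := by rw [nsmul_eq_mul]
            _ = ENNReal.ofReal (F.card * (2 * β)) := ofReal_nat_mul _ _
            _ ≤ ENNReal.ofReal (30 * β) := by
                apply ENNReal.ofReal_le_ofReal
                nlinarith [hcardR]
        · have hterm : ∀ q ∈ F, volume (I q) ≤ ENNReal.ofReal (8 * β / (n - 1)) := by
            intro q hqF
            rw [hF, Finset.mem_filter] at hqF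
            refine (vol_Iq β c hβ0 q hqF.2.1).trans (ENNReal.ofReal_le_ofReal ?_)
            have hq1 : (1:ℝ) ≤ |(q:ℝ)| := by
              rw [← Int.cast_abs]; exact_mod_cast Int.one_le_abs hqF.2.1
            have hlow := hqF.2.2
            rw [div_le_div_iff₀ (by linarith) (by linarith)]
            nlinarith
          calc ∑ q ∈ F, volume (I q) ≤ F.card • ENNReal.ofReal (8 * β / (n - 1)) :=
                Finset.sum_le_card_nsmul F _ _ hterm
            _ = ENNReal.ofReal (F.card * (8 * β / (n - 1))) := by
                rw [nsmul_eq_mul, ofReal_nat_mul]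
            _ ≤ ENNReal.ofReal (30 * β) := by
                apply ENNReal.ofReal_le_ofReal
                have hpos : (0:ℝ) < n - 1 := by linarith
                rw [mul_div_assoc', div_le_iff₀ hpos]
                nlinarith [mul_le_mul_of_nonneg_right hcardR hβ0.le,
                  mul_nonneg (show (0:ℝ) ≤ n - 5 by linarith) hβ0.le]


lemma slice2_fst (S : Set (ℝ × ℝ)) (hS : MeasurableSet S) (k : ℝ) (hk : 0 ≤ k)
    (hsub : ∀ p ∈ S, p.2 ∈ Set.Ioc (1:ℝ) 4)
    (hslice : ∀ y : ℝ, volume {x : ℝ | (x, y) ∈ S} ≤ ENNReal.ofReal k) :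
    volume S ≤ ENNReal.ofReal (3 * k) := by
  rw [Measure.volume_eq_prod, Measure.prod_apply_symm hS]
  calc ∫⁻ y, volume ((fun x => (x, y)) ⁻¹' S)
      ≤ ∫⁻ y, (Set.Ioc (1:ℝ) 4).indicator (fun _ => ENNReal.ofReal k) y := by
        apply lintegral_mono
        intro y
        by_cases hy : y ∈ Set.Ioc (1:ℝ) 4
        · rw [Set.indicator_of_mem hy]; exact hslice y
        · rw [Set.indicator_of_notMem hy]
          have : (fun x => (x, y)) ⁻¹' S = ∅ :=
            Set.eq_empty_iff_forall_notMem.mpr fun x hx => hy (hsub _ hx)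
          simp [this]
    _ = ENNReal.ofReal k * volume (Set.Ioc (1:ℝ) 4) :=
        lintegral_indicator_const measurableSet_Ioc _
    _ = ENNReal.ofReal (3 * k) := by
        rw [Real.volume_Ioc, ← ENNReal.ofReal_mul hk]
        norm_num [mul_comm]
lemma slice2_snd (S : Set (ℝ × ℝ)) (hS : MeasurableSet S) (k : ℝ) (hk : 0 ≤ k)
    (hsub : ∀ p ∈ S, p.1 ∈ Set.Ioc (1:ℝ) 4)
    (hslice : ∀ x : ℝ, volume {y : ℝ | (x, y) ∈ S} ≤ ENNReal.ofReal k) :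
    volume S ≤ ENNReal.ofReal (3 * k) := by
  rw [Measure.volume_eq_prod, Measure.prod_apply hS]
  calc ∫⁻ x, volume (Prod.mk x ⁻¹' S)
      ≤ ∫⁻ x, (Set.Ioc (1:ℝ) 4).indicator (fun _ => ENNReal.ofReal k) x := by
        apply lintegral_mono
        intro x
        by_cases hx : x ∈ Set.Ioc (1:ℝ) 4
        · rw [Set.indicator_of_mem hx]; exact hslice x
        · rw [Set.indicator_of_notMem hx]
          have : Prod.mk x ⁻¹' S = ∅ :=
            Set.eq_empty_iff_forall_notMem.mpr fun y hy => hx (hsub _ hy)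
          simp [this]
    _ = ENNReal.ofReal k * volume (Set.Ioc (1:ℝ) 4) :=
        lintegral_indicator_const measurableSet_Ioc _
    _ = ENNReal.ofReal (3 * k) := by
        rw [Real.volume_Ioc, ← ENNReal.ofReal_mul hk]
        norm_num [mul_comm]

lemma slice3_mid (S : Set (ℝ × ℝ × ℝ)) (hS : MeasurableSet S) (k : ℝ) (hk : 0 ≤ k)
    (hsub : ∀ g ∈ S, g.1 ∈ Set.Ioc (1:ℝ) 4 ∧ g.2.2 ∈ Set.Ioc (1:ℝ) 4)
    (hslice : ∀ x z : ℝ, volume {y : ℝ | (x, y, z) ∈ S} ≤ ENNReal.ofReal k) :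
    volume S ≤ ENNReal.ofReal (9 * k) := by
  rw [Measure.volume_eq_prod, Measure.prod_apply hS]
  calc ∫⁻ x, volume (Prod.mk x ⁻¹' S)
      ≤ ∫⁻ x, (Set.Ioc (1:ℝ) 4).indicator (fun _ => ENNReal.ofReal (3 * k)) x := by
        apply lintegral_mono
        intro x
        by_cases hx : x ∈ Set.Ioc (1:ℝ) 4
        · rw [Set.indicator_of_mem hx]
          exact slice2_fst _ (measurable_prodMk_left hS) k hk
            (fun p hp => (hsub (x, p) hp).2) (fun z => hslice x z)
        · rw [Set.indicator_of_notMem hx]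
          have : Prod.mk x ⁻¹' S = ∅ :=
            Set.eq_empty_iff_forall_notMem.mpr fun p hp => hx (hsub _ hp).1
          simp [this]
    _ = ENNReal.ofReal (3 * k) * volume (Set.Ioc (1:ℝ) 4) :=
        lintegral_indicator_const measurableSet_Ioc _
    _ = ENNReal.ofReal (9 * k) := by
        rw [Real.volume_Ioc, ← ENNReal.ofReal_mul (by linarith)]
        congr 1; ring

lemma slice3_thd (S : Set (ℝ × ℝ × ℝ)) (hS : MeasurableSet S) (k : ℝ) (hk : 0 ≤ k)
    (hsub : ∀ g ∈ S, g.1 ∈ Set.Ioc (1:ℝ) 4 ∧ g.2.1 ∈ Set.Ioc (1:ℝ) 4)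
    (hslice : ∀ x y : ℝ, volume {z : ℝ | (x, y, z) ∈ S} ≤ ENNReal.ofReal k) :
    volume S ≤ ENNReal.ofReal (9 * k) := by
  rw [Measure.volume_eq_prod, Measure.prod_apply hS]
  calc ∫⁻ x, volume (Prod.mk x ⁻¹' S)
      ≤ ∫⁻ x, (Set.Ioc (1:ℝ) 4).indicator (fun _ => ENNReal.ofReal (3 * k)) x := by
        apply lintegral_mono
        intro x
        by_cases hx : x ∈ Set.Ioc (1:ℝ) 4
        · rw [Set.indicator_of_mem hx]
          exact slice2_snd _ (measurable_prodMk_left hS) k hk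
            (fun p hp => (hsub (x, p) hp).2) (fun y => hslice x y)
        · rw [Set.indicator_of_notMem hx]
          have : Prod.mk x ⁻¹' S = ∅ :=
            Set.eq_empty_iff_forall_notMem.mpr fun p hp => hx (hsub _ hp).1
          simp [this]
    _ = ENNReal.ofReal (3 * k) * volume (Set.Ioc (1:ℝ) 4) :=
        lintegral_indicator_const measurableSet_Ioc _
    _ = ENNReal.ofReal (9 * k) := by
        rw [Real.volume_Ioc, ← ENNReal.ofReal_mul (by linarith)]
        congr 1; ring

lemma slice3_fst (S : Set (ℝ × ℝ × ℝ)) (hS : MeasurableSet S) (k : ℝ) (hk : 0 ≤ k)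
    (hsub : ∀ g ∈ S, g.2.1 ∈ Set.Ioc (1:ℝ) 4 ∧ g.2.2 ∈ Set.Ioc (1:ℝ) 4)
    (hslice : ∀ y z : ℝ, volume {x : ℝ | (x, y, z) ∈ S} ≤ ENNReal.ofReal k) :
    volume S ≤ ENNReal.ofReal (9 * k) := by
  rw [Measure.volume_eq_prod, Measure.prod_apply_symm hS]
  calc ∫⁻ p : ℝ × ℝ, volume ((fun x => (x, p)) ⁻¹' S)
      ≤ ∫⁻ p : ℝ × ℝ, (Set.Ioc (1:ℝ) 4 ×ˢ Set.Ioc (1:ℝ) 4).indicator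
          (fun _ => ENNReal.ofReal k) p := by
        apply lintegral_mono
        intro p
        by_cases hp : p ∈ Set.Ioc (1:ℝ) 4 ×ˢ Set.Ioc (1:ℝ) 4
        · rw [Set.indicator_of_mem hp]
          exact hslice p.1 p.2
        · rw [Set.indicator_of_notMem hp]
          have : (fun x => (x, p)) ⁻¹' S = ∅ :=
            Set.eq_empty_iff_forall_notMem.mpr fun x hx =>
              hp ⟨(hsub _ hx).1, (hsub _ hx).2⟩
          simp [this]
    _ = ENNReal.ofReal k * volume (Set.Ioc (1:ℝ) 4 ×ˢ Set.Ioc (1:ℝ) 4) :=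
        lintegral_indicator_const (measurableSet_Ioc.prod measurableSet_Ioc) _
    _ = ENNReal.ofReal (9 * k) := by
        rw [Measure.volume_eq_prod, Measure.prod_prod, Real.volume_Ioc,
          ← ENNReal.ofReal_mul (by norm_num), ← ENNReal.ofReal_mul hk]
        norm_num [mul_comm]


lemma measGen (f : ℝ × ℝ × ℝ → ℝ) (hf : Measurable f) (β : ℝ) :
    MeasurableSet {g : ℝ × ℝ × ℝ |
      g.1 ∈ Set.Ioc (1:ℝ) 4 ∧ g.2.1 ∈ Set.Ioc (1:ℝ) 4 ∧ g.2.2 ∈ Set.Ioc (1:ℝ) 4 ∧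
      |f g| < β} := by
  have : {g : ℝ × ℝ × ℝ |
      g.1 ∈ Set.Ioc (1:ℝ) 4 ∧ g.2.1 ∈ Set.Ioc (1:ℝ) 4 ∧ g.2.2 ∈ Set.Ioc (1:ℝ) 4 ∧
      |f g| < β}
      = (Set.Ioc (1:ℝ) 4 ×ˢ Set.Ioc (1:ℝ) 4 ×ˢ Set.Ioc (1:ℝ) 4) ∩
        (f ⁻¹' Set.Ioo (-β) β) := by
    ext g
    simp [Set.mem_Ioo, abs_lt, and_assoc, and_comm, and_left_comm]
  rw [this]
  exact (measurableSet_Ioc.prod (measurableSet_Ioc.prod measurableSet_Ioc)).inter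
    (hf measurableSet_Ioo)

/-- measure bound from the proof of Lemma 5 of the paper
(case in which the middle scaling coefficient is the smallest). -/
theorem stmt_2 (β : ℝ) (hβ : β ∈ Set.Ioc (0:ℝ) 1)
    (A0 A2 Q0 Q1 Q2 : ℕ) (hA0 : 0 < A0) (hA2 : 0 < A2)
    (hQ0 : 0 < Q0) (hQ1 : 0 < Q1) (hQ2 : 0 < Q2) :
    volume (⋃ (q0 : ℤ) (q1 : ℤ) (q2 : ℤ) (_ : (q0, q1, q2) ≠ (0, 0, 0))
        (_ : |q0| ≤ (Q0 : ℤ)) (_ : |q1| ≤ (Q1 : ℤ)) (_ : |q2| ≤ (Q2 : ℤ)),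
        {g : ℝ × ℝ × ℝ |
          g.1 ∈ Set.Ioc (1:ℝ) 4 ∧ g.2.1 ∈ Set.Ioc (1:ℝ) 4 ∧ g.2.2 ∈ Set.Ioc (1:ℝ) 4 ∧
          |(A0 : ℝ) * g.1 * (q0 : ℝ) + g.2.1 * (q1 : ℝ) + (A2 : ℝ) * g.2.2 * (q2 : ℝ)| < β})
      ≤ ENNReal.ofReal (3024 * β * (Q0 : ℝ) * (Q2 : ℝ)) := by
  obtain ⟨hβ0, hβ1⟩ := hβ
  set Z : ℤ × ℤ → Set (ℝ × ℝ × ℝ) := fun p =>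
    {g : ℝ × ℝ × ℝ |
      g.1 ∈ Set.Ioc (1:ℝ) 4 ∧ g.2.1 ∈ Set.Ioc (1:ℝ) 4 ∧ g.2.2 ∈ Set.Ioc (1:ℝ) 4 ∧
      |(A0 : ℝ) * g.1 * (p.1 : ℝ) + (A2 : ℝ) * g.2.2 * (p.2 : ℝ)| < β ∧ p ≠ (0, 0)}
    with hZ
  set T : ℤ × ℤ → Set (ℝ × ℝ × ℝ) := fun p =>
    {g : ℝ × ℝ × ℝ |
      g.1 ∈ Set.Ioc (1:ℝ) 4 ∧ g.2.1 ∈ Set.Ioc (1:ℝ) 4 ∧ g.2.2 ∈ Set.Ioc (1:ℝ) 4 ∧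
      ∃ q1 : ℤ, q1 ≠ 0 ∧
        |(A0 : ℝ) * g.1 * (p.1 : ℝ) + g.2.1 * (q1 : ℝ) + (A2 : ℝ) * g.2.2 * (p.2 : ℝ)| < β}
    with hT
  set P : Finset (ℤ × ℤ) :=
    Finset.Icc (-(Q0:ℤ)) (Q0:ℤ) ×ˢ Finset.Icc (-(Q2:ℤ)) (Q2:ℤ) with hP
  -- step 1 : inclusion
  have hsub : (⋃ (q0 : ℤ) (q1 : ℤ) (q2 : ℤ) (_ : (q0, q1, q2) ≠ (0, 0, 0))
        (_ : |q0| ≤ (Q0 : ℤ)) (_ : |q1| ≤ (Q1 : ℤ)) (_ : |q2| ≤ (Q2 : ℤ)),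
        {g : ℝ × ℝ × ℝ |
          g.1 ∈ Set.Ioc (1:ℝ) 4 ∧ g.2.1 ∈ Set.Ioc (1:ℝ) 4 ∧ g.2.2 ∈ Set.Ioc (1:ℝ) 4 ∧
          |(A0 : ℝ) * g.1 * (q0 : ℝ) + g.2.1 * (q1 : ℝ) + (A2 : ℝ) * g.2.2 * (q2 : ℝ)| < β})
      ⊆ ⋃ p ∈ P, (Z p ∪ T p) := by
    intro g hg
    simp only [Set.mem_iUnion] at hg
    obtain ⟨q0, q1, q2, hne, h0, h1, h2, hmem⟩ := hg
    obtain ⟨hg0, hg1, hg2, habs⟩ := hmem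
    have hpP : (q0, q2) ∈ P := by
      rw [hP, Finset.mem_product]
      constructor <;> rw [Finset.mem_Icc] <;>
        constructor <;> [linarith [neg_abs_le q0]; linarith [le_abs_self q0];
          linarith [neg_abs_le q2]; linarith [le_abs_self q2]]
    apply Set.mem_biUnion hpP
    by_cases hq1 : q1 = 0
    · left
      refine ⟨hg0, hg1, hg2, ?_, ?_⟩
      · have : (q1 : ℝ) = 0 := by exact_mod_cast congrArg (Int.cast : ℤ → ℝ) hq1
        rw [this] at habs
        convert habs using 2
        ring
      · intro hcon
        apply hne
        have h1' : q0 = 0 := by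
          have := congrArg Prod.fst hcon; simpa using this
        have h2' : q2 = 0 := by
          have := congrArg Prod.snd hcon; simpa using this
        rw [h1', h2', hq1]
    · right
      exact ⟨hg0, hg1, hg2, q1, hq1, habs⟩
  -- measurability
  have hZmeas : ∀ p : ℤ × ℤ, MeasurableSet (Z p) := by
    intro p
    by_cases hp : p = (0, 0)
    · have : Z p = ∅ := by
        rw [hZ]
        ext g
        simp [hp]
      rw [this]; exact MeasurableSet.empty
    · have : Z p = {g : ℝ × ℝ × ℝ |
          g.1 ∈ Set.Ioc (1:ℝ) 4 ∧ g.2.1 ∈ Set.Ioc (1:ℝ) 4 ∧ g.2.2 ∈ Set.Ioc (1:ℝ) 4 ∧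
          |(A0 : ℝ) * g.1 * (p.1 : ℝ) + (A2 : ℝ) * g.2.2 * (p.2 : ℝ)| < β} := by
        rw [hZ]
        ext g
        simp only [Set.mem_setOf_eq]
        tauto
      rw [this]
      exact measGen _ (by fun_prop) β
  have hTmeas : ∀ p : ℤ × ℤ, MeasurableSet (T p) := by
    intro p
    have : T p = ⋃ (q1 : ℤ) (_ : q1 ≠ 0),
        {g : ℝ × ℝ × ℝ |
          g.1 ∈ Set.Ioc (1:ℝ) 4 ∧ g.2.1 ∈ Set.Ioc (1:ℝ) 4 ∧ g.2.2 ∈ Set.Ioc (1:ℝ) 4 ∧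
          |(A0 : ℝ) * g.1 * (p.1 : ℝ) + g.2.1 * (q1 : ℝ) + (A2 : ℝ) * g.2.2 * (p.2 : ℝ)| < β} := by
      rw [hT]
      ext g
      simp only [Set.mem_iUnion, Set.mem_setOf_eq]
      tauto
    rw [this]
    exact MeasurableSet.iUnion fun q1 => MeasurableSet.iUnion fun _ =>
      measGen _ (by fun_prop) β
  -- step 2 : volume of Z p
  have hZvol : ∀ p : ℤ × ℤ, volume (Z p) ≤ ENNReal.ofReal (18 * β) := by
    rintro ⟨a, b⟩
    by_cases ha : a ≠ 0
    · have := slice3_fst (Z (a, b)) (hZmeas (a, b)) (2 * β) (by positivity)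
        (fun g hg => ⟨hg.2.1, hg.2.2.1⟩)
        (fun y z => ?_)
      · refine this.trans (ENNReal.ofReal_le_ofReal (by linarith))
      · -- slice bound
        have hq : (A0 : ℤ) * a ≠ 0 :=
          mul_ne_zero (by exact_mod_cast hA0.ne') ha
        have hss : {x : ℝ | (x, y, z) ∈ Z (a, b)}
            ⊆ {x : ℝ | x ∈ Set.Ioc (1:ℝ) 4 ∧
                |(A2 : ℝ) * z * (b : ℝ) + x * (((A0 : ℤ) * a : ℤ) : ℝ)| < β} := by
          rintro x ⟨hx, _, _, hab, _⟩
          refine ⟨hx, ?_⟩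
          convert hab using 2
          push_cast
          ring
        refine (measure_mono hss).trans ((vol_Iq β _ hβ0 _ hq).trans
          (ENNReal.ofReal_le_ofReal ?_))
        have h1 : (1:ℝ) ≤ |(((A0 : ℤ) * a : ℤ) : ℝ)| := by
          rw [← Int.cast_abs]
          exact_mod_cast Int.one_le_abs hq
        rw [div_le_iff₀ (by linarith)]
        nlinarith
    · push_neg at ha
      by_cases hb : b ≠ 0
      · have := slice3_thd (Z (a, b)) (hZmeas (a, b)) (2 * β) (by positivity)
          (fun g hg => ⟨hg.1, hg.2.1⟩)
          (fun x y => ?_)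
        · refine this.trans (ENNReal.ofReal_le_ofReal (by linarith))
        · have hq : (A2 : ℤ) * b ≠ 0 :=
            mul_ne_zero (by exact_mod_cast hA2.ne') hb
          have hss : {w : ℝ | (x, y, w) ∈ Z (a, b)}
              ⊆ {w : ℝ | w ∈ Set.Ioc (1:ℝ) 4 ∧
                  |(A0 : ℝ) * x * (a : ℝ) + w * (((A2 : ℤ) * b : ℤ) : ℝ)| < β} := by
            rintro w ⟨_, _, hw, hab, _⟩
            refine ⟨hw, ?_⟩
            convert hab using 2
            push_cast
            ring
          refine (measure_mono hss).trans ((vol_Iq β _ hβ0 _ hq).trans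
            (ENNReal.ofReal_le_ofReal ?_))
          have h1 : (1:ℝ) ≤ |(((A2 : ℤ) * b : ℤ) : ℝ)| := by
            rw [← Int.cast_abs]
            exact_mod_cast Int.one_le_abs hq
          rw [div_le_iff₀ (by linarith)]
          nlinarith
      · push_neg at hb
        have : Z (a, b) = ∅ := by
          rw [hZ]
          ext g
          simp [ha, hb]
        rw [this, measure_empty]
        positivity
  -- step 3 : volume of T p
  have hTvol : ∀ p : ℤ × ℤ, volume (T p) ≤ ENNReal.ofReal (270 * β) := by
    rintro ⟨a, b⟩
    have := slice3_mid (T (a, b)) (hTmeas (a, b)) (30 * β) (by positivity)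
      (fun g hg => ⟨hg.1, hg.2.2.1⟩)
      (fun x z => ?_)
    · refine this.trans (ENNReal.ofReal_le_ofReal (by linarith))
    · have hss : {y : ℝ | (x, y, z) ∈ T (a, b)}
          ⊆ {y : ℝ | y ∈ Set.Ioc (1:ℝ) 4 ∧ ∃ q : ℤ, q ≠ 0 ∧
              |((A0 : ℝ) * x * (a : ℝ) + (A2 : ℝ) * z * (b : ℝ)) + y * (q : ℝ)| < β} := by
        rintro y ⟨_, hy, _, q1, hq1, hab⟩
        refine ⟨hy, q1, hq1, ?_⟩
        convert hab using 2
        ring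
      exact (measure_mono hss).trans (lemA β _ hβ0 hβ1)
  -- step 4 : assemble
  have hcard : P.card = (2 * Q0 + 1) * (2 * Q2 + 1) := by
    have h0 : ((Q0:ℤ) + 1 - -(Q0:ℤ)).toNat = 2 * Q0 + 1 := by omega
    have h2 : ((Q2:ℤ) + 1 - -(Q2:ℤ)).toNat = 2 * Q2 + 1 := by omega
    rw [hP, Finset.card_product, Int.card_Icc, Int.card_Icc, h0, h2]
  calc volume _ ≤ volume (⋃ p ∈ P, (Z p ∪ T p)) := measure_mono hsub
    _ ≤ ∑ p ∈ P, volume (Z p ∪ T p) := measure_biUnion_finset_le P _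
    _ ≤ P.card • ENNReal.ofReal (288 * β) := by
        apply Finset.sum_le_card_nsmul
        intro p _
        calc volume (Z p ∪ T p) ≤ volume (Z p) + volume (T p) := measure_union_le _ _
          _ ≤ ENNReal.ofReal (18 * β) + ENNReal.ofReal (270 * β) :=
              add_le_add (hZvol p) (hTvol p)
          _ = ENNReal.ofReal (288 * β) := by
              rw [← ENNReal.ofReal_add (by positivity) (by positivity)]
              ring_nf
    _ ≤ ENNReal.ofReal (3024 * β * (Q0 : ℝ) * (Q2 : ℝ)) := by
        rw [nsmul_eq_mul, ofReal_nat_mul]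
        apply ENNReal.ofReal_le_ofReal
        rw [hcard]
        have hQ0R : (1:ℝ) ≤ (Q0 : ℝ) := by exact_mod_cast hQ0
        have hQ2R : (1:ℝ) ≤ (Q2 : ℝ) := by exact_mod_cast hQ2
        push_cast
        nlinarith [mul_le_mul_of_nonneg_right hQ0R hβ0.le,
          mul_le_mul_of_nonneg_right hQ2R hβ0.le,
          mul_nonneg (mul_nonneg hβ0.le (by linarith : (0:ℝ) ≤ (Q0:ℝ))) (by linarith : (0:ℝ) ≤ (Q2:ℝ))]
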